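/- Let G be the graph of a sparse symmetric matrix A with vertices {1,...,n}. Suppose there is a fill path from i to j (a path whose interior vertices are all numbered less than min{i,j}) and a fill path from k to j, with i > k > j. Then there is a fill path from i to k. -/

import Mathlib

open Matrix

/-- A fill path between `i` and `j` in the graph of a matrix `H` (edges wherever
`H` has a nonzero entry), recorded by its list `l` of interior vertices: all
interior vertices are smaller than `min i j`. -/
def IsFillPath {n : ℕ} (H : Matrix (Fin n) (Fin n) ℂ) (i j : Fin n)
    (l : List (Fin n)) : Prop :=
  List.Chain' (fun u v : Fin n => H u v ≠ 0) (i :: (l ++ [j])) ∧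
    ∀ v ∈ l, v < min i j

/-- If there are fill paths from `i` to `j` and from `k` to `j`
with `i > k > j`, then there is a fill path from `i` to `k`. -/
theorem fill_path_trans {n : ℕ} (H : Matrix (Fin n) (Fin n) ℂ)
    (hsymm : H.IsSymm)
    (i j k : Fin n) (hjk : j < k) (hki : k < i)
    (hij : ∃ l, IsFillPath H i j l) (hkj : ∃ l, IsFillPath H k j l) :
    ∃ l, IsFillPath H i k l := by
  obtain ⟨l1, h1c, h1v⟩ := hij
  obtain ⟨l2, h2c, h2v⟩ := hkj
  refine ⟨l1 ++ j :: l2.reverse, ?_, ?_⟩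
  · -- the reversed second path
    have hrev : List.Chain' (fun u v : Fin n => H u v ≠ 0)
        ((k :: (l2 ++ [j])).reverse) := by
      refine List.isChain_reverse.mpr ?_
      refine h2c.imp ?_
      intro a b hab
      intro h0
      exact hab ((hsymm.apply a b) ▸ h0)
    have heq : (k :: (l2 ++ [j])).reverse = j :: (l2.reverse ++ [k]) := by
      simp
    rw [heq] at hrev
    have hjoin : i :: ((l1 ++ j :: l2.reverse) ++ [k]) =
        (i :: (l1 ++ [j])) ++ (l2.reverse ++ [k]) := by
      simp
    rw [hjoin]
    apply List.IsChain.append h1c hrev.tail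
    intro x hx y hy
    have hxj : x = j := by
      rw [show i :: (l1 ++ [j]) = (i :: l1) ++ [j] by simp,
        List.getLast?_concat] at hx
      exact (Option.mem_some_iff.mp hx).symm
    subst hxj
    rcases List.isChain_cons.mp hrev with ⟨hhead, _⟩
    exact hhead y hy
  · intro v hv
    have hmin : min i k = k := min_eq_right hki.le
    rw [hmin]
    rcases List.mem_append.mp hv with h | h
    · have := h1v v h
      have hij' : min i j = j := min_eq_right (hjk.trans hki).le
      rw [hij'] at this
      exact this.trans hjk
    · rcases List.mem_cons.mp h with h | h
      · exact h ▸ hjk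
      · have := h2v v (List.mem_reverse.mp h)
        have : v < j := by
          rwa [min_eq_right hjk.le] at this
        exact this.trans hjk
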